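/- The radius of the capped simplex F = {f ∈ [0,1]^N : Σ_i f_i = C} with respect to its 'center' (C/N)·𝟙 equals √(C(1 − C/N)), i.e., sup_{f∈F} ‖f − (C/N)𝟙‖₂ = √(C(1−C/N)), for integer C with 0 ≤ C ≤ N. -/

import Mathlib

lemma sum_sq_center (N C : ℕ) (hN : 0 < N) (f : EuclideanSpace ℝ (Fin N))
    (hsum : ∑ i, f i = (C : ℝ)) :
    ∑ i, (f i - (C : ℝ) / N) ^ 2 = (∑ i, (f i) ^ 2) - (C : ℝ) ^ 2 / N := by
  have hN' : (N : ℝ) ≠ 0 := Nat.cast_ne_zero.mpr hN.ne'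
  have : ∀ i : Fin N, (f i - (C : ℝ) / N) ^ 2
      = (f i) ^ 2 - 2 * ((C : ℝ) / N) * f i + ((C : ℝ) / N) ^ 2 := by
    intro i; ring
  rw [Finset.sum_congr rfl (fun i _ => this i)]
  rw [Finset.sum_add_distrib, Finset.sum_sub_distrib, ← Finset.mul_sum, hsum,
    Finset.sum_const, Finset.card_univ, Fintype.card_fin, nsmul_eq_mul]
  field_simp
  ring

/-- The radius of the capped simplex `F = {f ∈ [0,1]^N : ∑ f_i = C}` with respect to its
center `(C/N)·𝟙` equals `√(C(1 - C/N))`: the supremum of `‖f - (C/N)𝟙‖₂` over `F` is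
attained and equals `√(C(1 - C/N))`, for an integer `0 ≤ C ≤ N`. -/
theorem capped_simplex_radius (N C : ℕ) (hN : 0 < N) (hCN : C ≤ N)
    (F : Set (EuclideanSpace ℝ (Fin N)))
    (hF : F = {f : EuclideanSpace ℝ (Fin N) |
      (∀ i, 0 ≤ f i ∧ f i ≤ 1) ∧ ∑ i, f i = (C : ℝ)})
    (center : EuclideanSpace ℝ (Fin N)) (hcenter : ∀ i, center i = (C : ℝ) / N) :
    IsGreatest ((fun f => ‖f - center‖) '' F) (Real.sqrt ((C : ℝ) * (1 - (C : ℝ) / N))) := by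
  have hN' : (N : ℝ) ≠ 0 := Nat.cast_ne_zero.mpr hN.ne'
  have htarget : (C : ℝ) * (1 - (C : ℝ) / N) = (C : ℝ) - (C : ℝ) ^ 2 / N := by ring
  have hnorm : ∀ f : EuclideanSpace ℝ (Fin N),
      ‖f - center‖ = Real.sqrt (∑ i, (f i - (C : ℝ) / N) ^ 2) := by
    intro f
    rw [EuclideanSpace.norm_eq]
    congr 1
    apply Finset.sum_congr rfl
    intro i _
    rw [show (f - center) i = f i - center i from rfl, hcenter, Real.norm_eq_abs, sq_abs]
  constructor
  · -- membership: the binary vector with first C coordinates 1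
    set g : EuclideanSpace ℝ (Fin N) := WithLp.toLp 2 (fun i : Fin N => if (i : ℕ) < C then (1 : ℝ) else 0) with hg
    have hgsum : ∑ i, g i = (C : ℝ) := by
      rw [Fin.sum_univ_eq_sum_range (fun i => if i < C then (1 : ℝ) else 0)]
      rw [Finset.range_eq_Ico, ← Finset.sum_Ico_consecutive _ (Nat.zero_le C) hCN]
      have h1 : ∑ i ∈ Finset.Ico 0 C, (if i < C then (1:ℝ) else 0) = C := by
        rw [Finset.sum_congr rfl (fun i hi => if_pos (Finset.mem_Ico.mp hi).2)]
        simp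
      have h2 : ∑ i ∈ Finset.Ico C N, (if i < C then (1:ℝ) else 0) = 0 := by
        rw [Finset.sum_congr rfl (fun i hi => if_neg (by
          have := (Finset.mem_Ico.mp hi).1; omega))]
        simp
      rw [h1, h2, add_zero]
    have hgsq : ∑ i, (g i) ^ 2 = (C : ℝ) := by
      rw [← hgsum]
      apply Finset.sum_congr rfl
      intro i _
      by_cases h : (i : ℕ) < C <;> simp [hg, h]
    refine ⟨g, ?_, ?_⟩
    · rw [hF]
      refine ⟨fun i => ?_, hgsum⟩
      by_cases h : (i : ℕ) < C <;> simp [hg, h]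
    · show ‖g - center‖ = _
      rw [hnorm, sum_sq_center N C hN g hgsum, hgsq, htarget]
  · -- upper bound
    rintro r ⟨f, hfF, rfl⟩
    rw [hF] at hfF
    obtain ⟨hf01, hfsum⟩ := hfF
    show ‖f - center‖ ≤ _
    rw [hnorm, sum_sq_center N C hN f hfsum, htarget]
    apply Real.sqrt_le_sqrt
    have : ∑ i, (f i) ^ 2 ≤ ∑ i, f i := by
      apply Finset.sum_le_sum
      intro i _
      have := hf01 i
      nlinarith [this.1, this.2]
    rw [hfsum] at this
    linarith
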